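/- Let (X,f) be a dynamical system with X a compact metric space and f : X → X a continuous surjection. If f has the almost specification property, then f has the asymptotic average shadowing property. -/

import Mathlib

open Filter Metric Set MeasureTheory Topology

section Defs

variable {X : Type*} [MetricSpace X]

/-- The Bowen ball of radius `ε` centered at `x` along a finite set of times `Λ`. -/
def bowenBallAlong (f : X → X) (Λ : Finset ℕ) (x : X) (ε : ℝ) : Set X :=
  {y | ∀ j ∈ Λ, dist (f^[j] x) (f^[j] y) < ε}

/-- `g` is a mistake function with threshold `ε₀`. -/
structure IsMistakeFun (g : ℕ → ℝ → ℕ) (ε₀ : ℝ) : Prop where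
  pos : 0 < ε₀
  mono : ∀ n : ℕ, ∀ ε : ℝ, 0 < ε → ε ≤ ε₀ → g n ε ≤ g (n + 1) ε
  small : ∀ ε : ℝ, 0 < ε → ε ≤ ε₀ →
    Tendsto (fun n : ℕ => (g n ε : ℝ) / n) atTop (nhds 0)
  ext : ∀ n : ℕ, ∀ ε : ℝ, ε₀ < ε → g n ε = g n ε₀

/-- The `(g;n,ε)`-Bowen ball `B_n(g;x,ε)`: union of Bowen balls along all
`Λ ⊆ {0,…,n-1}` with `#Λ ≥ n - g(n,ε)`. -/
def mistakeBowenBall (f : X → X) (g : ℕ → ℝ → ℕ) (n : ℕ) (x : X) (ε : ℝ) : Set X :=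
  ⋃ Λ ∈ {Λ : Finset ℕ | Λ ⊆ Finset.range n ∧ n - g n ε ≤ Λ.card},
    bowenBallAlong f Λ x ε

/-- Almost specification property with given mistake function `g` and gap function `kg`. -/
def AlmostSpecWith (f : X → X) (g : ℕ → ℝ → ℕ) (kg : ℝ → ℕ) : Prop :=
  ∀ m : ℕ, 1 ≤ m → ∀ (ε : ℕ → ℝ) (x : ℕ → X) (nseq : ℕ → ℕ),
    (∀ j, 1 ≤ j → j ≤ m → 0 < ε j) →
    (∀ j, 1 ≤ j → j ≤ m → kg (ε j) ≤ nseq j) →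
    ∃ z : X, ∀ j, 1 ≤ j → j ≤ m →
      f^[∑ s ∈ Finset.Ico 1 j, nseq s] z ∈ mistakeBowenBall f g (nseq j) (x j) (ε j)

/-- The almost specification property. -/
def AlmostSpec (f : X → X) : Prop :=
  ∃ (g : ℕ → ℝ → ℕ) (ε₀ : ℝ) (kg : ℝ → ℕ),
    IsMistakeFun g ε₀ ∧ AlmostSpecWith f g kg

/-- `{x_n}` is a `δ`-average-pseudo-orbit of `f`. -/
def AvgPseudoOrbit (f : X → X) (δ : ℝ) (x : ℕ → X) : Prop :=
  ∃ N : ℕ, 0 < N ∧ ∀ n : ℕ, N ≤ n → ∀ k : ℕ,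
    (∑ i ∈ Finset.range n, dist (f (x (i + k))) (x (i + k + 1))) / n < δ

/-- `{x_n}` is `ε`-shadowed in average by `y`. -/
def ShadowedInAvg (f : X → X) (ε : ℝ) (x : ℕ → X) (y : X) : Prop :=
  limsup (fun n : ℕ => (∑ i ∈ Finset.range n, dist (f^[i] y) (x i)) / n) atTop < ε

/-- The average shadowing property. -/
def AvgShadowing (f : X → X) : Prop :=
  ∀ ε : ℝ, 0 < ε → ∃ δ : ℝ, 0 < δ ∧
    ∀ x : ℕ → X, AvgPseudoOrbit f δ x → ∃ y : X, ShadowedInAvg f ε x y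

/-- `{x_n}` is an asymptotic average pseudo-orbit of `f`. -/
def AsympAvgPseudoOrbit (f : X → X) (x : ℕ → X) : Prop :=
  Tendsto (fun n : ℕ => (∑ i ∈ Finset.range n, dist (f (x i)) (x (i + 1))) / n)
    atTop (nhds 0)

/-- `{x_n}` is asymptotically shadowed in average by `y`. -/
def AsympShadowedInAvg (f : X → X) (x : ℕ → X) (y : X) : Prop :=
  Tendsto (fun n : ℕ => (∑ i ∈ Finset.range n, dist (f^[i] y) (x i)) / n)
    atTop (nhds 0)

/-- The asymptotic average shadowing property. -/
def AsympAvgShadowing (f : X → X) : Prop :=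
  ∀ x : ℕ → X, AsympAvgPseudoOrbit f x → ∃ y : X, AsympShadowedInAvg f x y

/-- An infinite `δ`-pseudo-orbit. -/
def PseudoOrbit (f : X → X) (δ : ℝ) (x : ℕ → X) : Prop :=
  ∀ i : ℕ, dist (f (x i)) (x (i + 1)) < δ

/-- There exists a finite `δ`-pseudo-orbit of length `n` from `x` to `y`. -/
def FinChain (f : X → X) (δ : ℝ) (n : ℕ) (x y : X) : Prop :=
  ∃ c : ℕ → X, c 0 = x ∧ c n = y ∧ ∀ i < n, dist (f (c i)) (c (i + 1)) < δ

/-- Chain transitivity. -/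
def ChainTransitive (f : X → X) : Prop :=
  ∀ δ : ℝ, 0 < δ → ∀ x y : X, ∃ n : ℕ, 0 < n ∧ FinChain f δ n x y

/-- Chain mixing. -/
def ChainMixing (f : X → X) : Prop :=
  ∀ δ : ℝ, 0 < δ → ∀ x y : X, ∃ N : ℕ, 0 < N ∧ ∀ n : ℕ, N ≤ n → FinChain f δ n x y

/-- The shadowing property. -/
def Shadowing (f : X → X) : Prop :=
  ∀ ε : ℝ, 0 < ε → ∃ δ : ℝ, 0 < δ ∧
    ∀ x : ℕ → X, PseudoOrbit f δ x → ∃ z : X, ∀ i : ℕ, dist (f^[i] z) (x i) < ε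

/-- The limit shadowing property. -/
def LimitShadowing (f : X → X) : Prop :=
  ∀ x : ℕ → X, Tendsto (fun i : ℕ => dist (f (x i)) (x (i + 1))) atTop (nhds 0) →
    ∃ z : X, Tendsto (fun i : ℕ => dist (f^[i] z) (x i)) atTop (nhds 0)

/-- Topological transitivity. -/
def TopTransitive {Y : Type*} [TopologicalSpace Y] (f : Y → Y) : Prop :=
  ∀ U V : Set Y, IsOpen U → IsOpen V → U.Nonempty → V.Nonempty →
    ∃ n : ℕ, 0 < n ∧ (f^[n] '' U ∩ V).Nonempty

/-- Total transitivity. -/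
def TotallyTransitive {Y : Type*} [TopologicalSpace Y] (f : Y → Y) : Prop :=
  ∀ n : ℕ, 1 ≤ n → TopTransitive f^[n]

/-- Topological weak mixing: `f × f` is transitive. -/
def WeaklyMixing {Y : Type*} [TopologicalSpace Y] (f : Y → Y) : Prop :=
  TopTransitive (Prod.map f f)

/-- Topological mixing. -/
def TopMixing {Y : Type*} [TopologicalSpace Y] (f : Y → Y) : Prop :=
  ∀ U V : Set Y, IsOpen U → IsOpen V → U.Nonempty → V.Nonempty →
    ∃ N : ℕ, 0 < N ∧ ∀ n : ℕ, N ≤ n → (f^[n] '' U ∩ V).Nonempty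

/-- The forward orbit of a point. -/
def fOrbit (f : X → X) (x : X) : Set X := Set.range fun n : ℕ => f^[n] x

/-- `x` is a minimal point of `f`: every point of the orbit closure of `x`
has orbit dense in that orbit closure. -/
def MinimalPoint (f : X → X) (x : X) : Prop :=
  ∀ y ∈ closure (fOrbit f x), closure (fOrbit f x) ⊆ closure (fOrbit f y)

variable [MeasurableSpace X]

/-- `μ` is an `f`-invariant Borel probability measure. -/
def InvariantProb (f : X → X) (μ : Measure X) : Prop :=
  IsProbabilityMeasure μ ∧ ∀ B : Set X, MeasurableSet B → μ (f ⁻¹' B) = μ B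

/-- A set is universally null if it has measure zero for every invariant
probability measure. -/
def UnivNull (f : X → X) (U : Set X) : Prop :=
  ∀ μ : Measure X, InvariantProb f μ → μ U = 0

/-- The measure center: complement of the union of all universally null open sets. -/
def measureCenter (f : X → X) : Set X :=
  (⋃ U ∈ {U : Set X | IsOpen U ∧ UnivNull f U}, U)ᶜ

/-- `μ` has full support. -/
def FullSupport (μ : Measure X) : Prop :=
  ∀ U : Set X, IsOpen U → U.Nonempty → 0 < μ U

end Defs

section Visits

variable {X : Type*} [MetricSpace X]

/-- The set of visiting times `N(x,U)`. -/
def visitTimes (f : X → X) (x : X) (U : Set X) : Set ℕ :=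
  {n : ℕ | 0 < n ∧ f^[n] x ∈ U}

/-- `η(n,U) = max_{x ∈ X} #(N(x,U) ∩ {0,…,n-1})`. -/
noncomputable def eta (f : X → X) (U : Set X) (n : ℕ) : ℕ :=
  sSup {k : ℕ | ∃ x : X, k = (visitTimes f x U ∩ Set.Iio n).ncard}

/-- The visit frequency `ξ(U) = inf_{n>0} η(n,U)/n`. -/
noncomputable def xi (f : X → X) (U : Set X) : ℝ :=
  ⨅ n : ℕ, (eta f U (n + 1) : ℝ) / (n + 1)

/-- `J ⊆ ℕ` has asymptotic density `a`. -/
def HasDensity (J : Set ℕ) (a : ℝ) : Prop :=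
  Tendsto (fun n : ℕ => ((J ∩ Set.Iio n).ncard : ℝ) / n) atTop (nhds a)

/-- Upper asymptotic density of a set of naturals. -/
noncomputable def upperDensity (J : Set ℕ) : ℝ :=
  limsup (fun n : ℕ => ((J ∩ Set.Iio n).ncard : ℝ) / n) atTop

end Visits


section Aux

-- A2 telescope
lemma sum_Ico_telescope {M : Type*} [AddCommMonoid M] (F : ℕ → M) (c : ℕ → ℕ) (hc : Monotone c) :
    ∀ {a b : ℕ}, a ≤ b →
      ∑ j ∈ Finset.Ico a b, ∑ i ∈ Finset.Ico (c j) (c (j+1)), F i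
        = ∑ i ∈ Finset.Ico (c a) (c b), F i := by
  intro a b hab
  induction b, hab using Nat.le_induction with
  | base => simp
  | succ b hab ih =>
    rw [Finset.sum_Ico_succ_top hab, ih,
      Finset.sum_Ico_consecutive F (hc hab) (hc (Nat.le_succ b))]

-- A1 chain lemma
lemma chain_lemma {X : Type*} [MetricSpace X] [CompactSpace X] (f : X → X) (hf : Continuous f)
    (n : ℕ) (ε : ℝ) (hε : 0 < ε) :
    ∃ δ > 0, ∀ c : ℕ → X, ∀ r ≤ n, (∀ s < r, dist (f (c s)) (c (s+1)) < δ) →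
      dist (f^[r] (c 0)) (c r) < ε := by
  induction n generalizing ε with
  | zero =>
    exact ⟨ε, hε, by intro c r hr _; interval_cases r; simpa using hε⟩
  | succ n ih =>
    have hu : UniformContinuous f := CompactSpace.uniformContinuous_of_continuous hf
    obtain ⟨δ₁, hδ₁, hδ₁'⟩ := Metric.uniformContinuous_iff.mp hu (ε/2) (by linarith)
    obtain ⟨δ₂, hδ₂, hδ₂'⟩ := ih (min δ₁ (ε/2)) (by positivity)
    refine ⟨min δ₂ (ε/2), by positivity, ?_⟩
    intro c r hr hjump
    rcases Nat.lt_or_ge r (n+1) with h | h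
    · have := hδ₂' c r (by omega) (fun s hs => lt_of_lt_of_le (hjump s hs) (min_le_left _ _))
      exact lt_of_lt_of_le this (le_trans (min_le_right _ _) (by linarith))
    · have hr' : r = n + 1 := by omega
      subst hr'
      have h1 : dist (f^[n] (c 0)) (c n) < min δ₁ (ε/2) :=
        hδ₂' c n (le_refl n) (fun s hs => lt_of_lt_of_le (hjump s (by omega)) (min_le_left _ _))
      have h2 : dist (f (f^[n] (c 0))) (f (c n)) < ε/2 :=
        hδ₁' (lt_of_lt_of_le h1 (min_le_left _ _))
      have h3 : dist (f (c n)) (c (n+1)) < ε/2 :=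
        lt_of_lt_of_le (hjump n (by omega)) (min_le_right _ _)
      calc dist (f^[n+1] (c 0)) (c (n+1))
          ≤ dist (f^[n+1] (c 0)) (f (c n)) + dist (f (c n)) (c (n+1)) := dist_triangle _ _ _
        _ < ε/2 + ε/2 := by
            rw [Function.iterate_succ_apply']
            exact add_lt_add h2 h3
        _ = ε := by ring

lemma spec_limit {X : Type*} [MetricSpace X] [CompactSpace X] (f : X → X) (hf : Continuous f)
    (g : ℕ → ℝ → ℕ) (kg : ℝ → ℕ) (hspec : AlmostSpecWith f g kg)
    (ε' : ℕ → ℝ) (nseq : ℕ → ℕ) (x' : ℕ → X)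
    (hε : ∀ j, 1 ≤ j → 0 < ε' j) (hn : ∀ j, 1 ≤ j → kg (ε' j) ≤ nseq j) :
    ∃ y : X, ∀ j, 1 ≤ j → ∃ Λ : Finset ℕ, Λ ⊆ Finset.range (nseq j) ∧
      nseq j - g (nseq j) (ε' j) ≤ Λ.card ∧
      ∀ r ∈ Λ, dist (f^[r] (x' j)) (f^[r + ∑ s ∈ Finset.Ico 1 j, nseq s] y) ≤ ε' j := by
  -- closed target sets
  set L : ℕ → ℕ := fun j => ∑ s ∈ Finset.Ico 1 j, nseq s with hL
  set C : ℕ → Set X := fun j =>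
    ⋃ Λ ∈ {Λ : Finset ℕ | Λ ⊆ Finset.range (nseq j) ∧ nseq j - g (nseq j) (ε' j) ≤ Λ.card},
      {w : X | ∀ r ∈ Λ, dist (f^[r] (x' j)) (f^[r] w) ≤ ε' j} with hC
  have hCclosed : ∀ j, IsClosed (C j) := by
    intro j
    apply Set.Finite.isClosed_biUnion
    · exact Set.Finite.subset (Finset.range (nseq j)).powerset.finite_toSet
        (fun Λ hΛ => Finset.mem_coe.mpr (Finset.mem_powerset.mpr hΛ.1))
    · intro Λ _
      have : {w : X | ∀ r ∈ Λ, dist (f^[r] (x' j)) (f^[r] w) ≤ ε' j}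
          = ⋂ r ∈ Λ, {w : X | dist (f^[r] (x' j)) (f^[r] w) ≤ ε' j} := by
        ext w; simp
      rw [this]
      refine isClosed_biInter (fun r _ => ?_)
      exact isClosed_le (Continuous.dist continuous_const (hf.iterate r)) continuous_const
  -- choose z m for each m ≥ 1
  have hz : ∀ m : ℕ, ∃ z : X, ∀ j, 1 ≤ j → j ≤ m + 1 → f^[L j] z ∈ C j := by
    intro m
    obtain ⟨z, hzz⟩ := hspec (m+1) (by omega) ε' x' nseq
      (fun j hj _ => hε j hj) (fun j hj _ => hn j hj)
    refine ⟨z, fun j hj hjm => ?_⟩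
    have := hzz j hj hjm
    simp only [mistakeBowenBall, Set.mem_iUnion] at this
    obtain ⟨Λ, hΛ, hball⟩ := this
    simp only [hC, Set.mem_iUnion]
    exact ⟨Λ, hΛ, fun r hr => le_of_lt (hball r hr)⟩
  choose z hzmem using hz
  obtain ⟨y, -, φ, hφmono, hφlim⟩ := isCompact_univ.tendsto_subseq (fun m => Set.mem_univ (z m))
  refine ⟨y, fun j hj => ?_⟩
  have hyC : f^[L j] y ∈ C j := by
    have hcl : IsClosed ((f^[L j]) ⁻¹' (C j)) := (hCclosed j).preimage (hf.iterate _)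
    have : y ∈ (f^[L j]) ⁻¹' (C j) := by
      refine hcl.mem_of_tendsto hφlim ?_
      filter_upwards [eventually_ge_atTop j] with m hm
      exact hzmem (φ m) j hj (by have h2 : m ≤ φ m := hφmono.le_apply; omega)
    exact this
  simp only [hC, Set.mem_iUnion] at hyC
  obtain ⟨Λ, ⟨hΛ1, hΛ2⟩, hball⟩ := hyC
  refine ⟨Λ, hΛ1, hΛ2, fun r hr => ?_⟩
  have := hball r hr
  rwa [← Function.iterate_add_apply] at this

end Aux

set_option maxHeartbeats 2000000

/-- For a continuous surjection on a compact metric space, almost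
specification implies the asymptotic average shadowing property. -/
theorem almostSpec_implies_asympAvgShadowing
    {X : Type*} [MetricSpace X] [CompactSpace X]
    (f : X → X) (hf : Continuous f) (hsurj : Function.Surjective f)
    (h : AlmostSpec f) : AsympAvgShadowing f := by
  obtain ⟨g, ε₀, kg, hmf, hspec⟩ := h
  intro x hx
  haveI : Nonempty X := ⟨x 0⟩
  -- diameter bound
  obtain ⟨D0, hD0⟩ := Metric.isBounded_iff.mp (isCompact_univ (X := X)).isBounded
  set D : ℝ := max D0 1 with hD
  have hD1 : (1:ℝ) ≤ D := le_max_right _ _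
  have hDpos : (0:ℝ) < D := lt_of_lt_of_le one_pos hD1
  have hDd : ∀ a b : X, dist a b ≤ D := fun a b =>
    le_trans (hD0 (Set.mem_univ a) (Set.mem_univ b)) (le_max_left _ _)
  -- scales
  have hε₀ : 0 < ε₀ := hmf.pos
  set e : ℕ → ℝ := fun k => ε₀ / 2 ^ (k + 1) with he
  have he0 : ∀ k, 0 < e k := fun k => by positivity
  have heε₀ : ∀ k, e k ≤ ε₀ := by
    intro k
    exact div_le_self hε₀.le (one_le_pow₀ one_le_two)
  have hemono : ∀ {k k'}, k ≤ k' → e k' ≤ e k := by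
    intro k k' hk
    apply div_le_div_of_nonneg_left (le_of_lt hε₀) (by positivity)
    exact pow_le_pow_right₀ one_le_two (by omega)
  have helim : ∀ ε : ℝ, 0 < ε → ∃ k, e k < ε := by
    intro ε hε
    obtain ⟨k, hk⟩ := pow_unbounded_of_one_lt (ε₀ / ε) (one_lt_two (α := ℝ))
    refine ⟨k, ?_⟩
    rw [he]
    rw [div_lt_iff₀ (by positivity)]
    have h2 : (2:ℝ)^k ≤ 2^(k+1) := pow_le_pow_right₀ one_le_two (by omega)
    calc ε₀ = (ε₀ / ε) * ε := by field_simp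
    _ < 2^k * ε := by nlinarith
    _ ≤ ε * 2^(k+1) := by nlinarith
  -- block lengths
  have hnex : ∀ k : ℕ, ∃ t : ℕ, 1 ≤ t ∧ ∀ n, t ≤ n →
      kg (e k) ≤ n ∧ (g n (e k) : ℝ) ≤ e k * n := by
    intro k
    have hsm := hmf.small (e k) (he0 k) (heε₀ k)
    have hev : ∀ᶠ n : ℕ in atTop, (g n (e k) : ℝ) / n < e k :=
      hsm.eventually_lt_const (he0 k)
    obtain ⟨t₀, ht₀⟩ := eventually_atTop.mp hev
    refine ⟨max 1 (max t₀ (kg (e k))), le_max_left _ _, fun n hn => ?_⟩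
    have h1 : t₀ ≤ n := le_trans (le_trans (le_max_left _ _) (le_max_right _ _)) hn
    have h2 : kg (e k) ≤ n := le_trans (le_trans (le_max_right _ _) (le_max_right _ _)) hn
    have h3 : 1 ≤ n := le_trans (le_max_left _ _) hn
    refine ⟨h2, ?_⟩
    have := ht₀ n h1
    have hn0 : (0:ℝ) < n := by exact_mod_cast h3
    rw [div_lt_iff₀ hn0] at this
    linarith
  choose t ht1 ht2 using hnex
  set nn : ℕ → ℕ := fun k => Nat.rec (t 0) (fun k ih => max (t (k+1)) ih) k with hnn
  have hnn0 : nn 0 = t 0 := rfl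
  have hnnsucc : ∀ k, nn (k+1) = max (t (k+1)) (nn k) := fun k => rfl
  have hnt : ∀ k, t k ≤ nn k := by
    intro k; cases k with
    | zero => exact le_refl _
    | succ k => rw [hnnsucc]; exact le_max_left _ _
  have hnmono : ∀ {k k'}, k ≤ k' → nn k ≤ nn k' := by
    intro k k' hk
    induction k', hk using Nat.le_induction with
    | base => exact le_refl _
    | succ k' hk ih => rw [hnnsucc]; exact le_trans ih (le_max_right _ _)
  have hn1 : ∀ k, 1 ≤ nn k := fun k => le_trans (ht1 k) (hnt k)
  have hnkg : ∀ k, kg (e k) ≤ nn k := fun k => (ht2 k (nn k) (hnt k)).1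
  have hng : ∀ k, (g (nn k) (e k) : ℝ) ≤ e k * nn k := fun k => (ht2 k (nn k) (hnt k)).2
  -- chain constants
  have hδex : ∀ k, ∃ δ : ℝ, 0 < δ ∧ ∀ c : ℕ → X, ∀ r ≤ nn k,
      (∀ s < r, dist (f (c s)) (c (s+1)) < δ) → dist (f^[r] (c 0)) (c r) < e k := by
    intro k
    obtain ⟨δ, hδ, hδ'⟩ := chain_lemma f hf (nn k) (e k) (he0 k)
    exact ⟨δ, hδ, hδ'⟩
  choose δc hδc1 hδc2 using hδex
  set δ : ℕ → ℝ := fun k => Nat.rec (δc 0) (fun k ih => min (δc (k+1)) ih) k with hδdef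
  have hδsucc : ∀ k, δ (k+1) = min (δc (k+1)) (δ k) := fun k => rfl
  have hδle : ∀ k, δ k ≤ δc k := by
    intro k; cases k with
    | zero => exact le_refl _
    | succ k => rw [hδsucc]; exact min_le_left _ _
  have hδpos : ∀ k, 0 < δ k := by
    intro k
    induction k with
    | zero => exact hδc1 0
    | succ k ih => rw [hδsucc]; exact lt_min (hδc1 _) ih
  have hδanti : ∀ {k k'}, k ≤ k' → δ k' ≤ δ k := by
    intro k k' hk
    induction k', hk using Nat.le_induction with
    | base => exact le_refl _
    | succ k' hk ih => rw [hδsucc]; exact le_trans (min_le_right _ _) ih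
  -- bad-density thresholds
  have hbadex : ∀ k : ℕ, ∃ N₁ : ℕ, 1 ≤ N₁ ∧ ∀ N, N₁ ≤ N →
      (((Finset.range N).filter (fun i => δ k ≤ dist (f (x i)) (x (i+1)))).card : ℝ)
        ≤ e k / nn k * N := by
    intro k
    have hx' : Tendsto (fun n : ℕ =>
        (∑ i ∈ Finset.range n, dist (f (x i)) (x (i + 1))) / n) atTop (nhds 0) := hx
    have hnnk : (0:ℝ) < nn k := by exact_mod_cast hn1 k
    have hρ : (0:ℝ) < e k / nn k * δ k := by
      have := he0 k; have := hδpos k; positivity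
    obtain ⟨N₁, hN₁⟩ := eventually_atTop.mp (hx'.eventually_lt_const hρ)
    refine ⟨max 1 N₁, le_max_left _ _, fun N hN => ?_⟩
    have hN0 : (0:ℝ) < N := by
      have : (1:ℕ) ≤ N := le_trans (le_max_left _ _) hN
      exact_mod_cast this
    have hsum := hN₁ N (le_trans (le_max_right _ _) hN)
    rw [div_lt_iff₀ hN0] at hsum
    have hcard : (((Finset.range N).filter
          (fun i => δ k ≤ dist (f (x i)) (x (i+1)))).card : ℝ) * δ k
        ≤ ∑ i ∈ Finset.range N, dist (f (x i)) (x (i+1)) := by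
      calc (((Finset.range N).filter (fun i => δ k ≤ dist (f (x i)) (x (i+1)))).card : ℝ) * δ k
          = ∑ _i ∈ (Finset.range N).filter (fun i => δ k ≤ dist (f (x i)) (x (i+1))), δ k := by
            rw [Finset.sum_const, nsmul_eq_mul]
        _ ≤ ∑ i ∈ (Finset.range N).filter (fun i => δ k ≤ dist (f (x i)) (x (i+1))),
              dist (f (x i)) (x (i+1)) :=
            Finset.sum_le_sum (fun i hi => (Finset.mem_filter.mp hi).2)
        _ ≤ ∑ i ∈ Finset.range N, dist (f (x i)) (x (i+1)) :=
            Finset.sum_le_sum_of_subset_of_nonneg (Finset.filter_subset _ _)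
              (fun i _ _ => dist_nonneg)
    have hδk := hδpos k
    nlinarith [hcard, hsum]
  choose Nb hNb1 hNb2 using hbadex
  -- block structure
  set m : ℕ → ℕ := fun k => max 1 (max (Nb (k+1)) (nn (k+1))) with hm
  have hm1 : ∀ k, 1 ≤ m k := fun k => le_max_left _ _
  set M : ℕ → ℕ := fun k => Nat.rec 1 (fun k ih => ih + m k) k with hM
  have hM0 : M 0 = 1 := rfl
  have hMsucc : ∀ k, M (k+1) = M k + m k := fun k => rfl
  have hMmono : ∀ {k k'}, k ≤ k' → M k ≤ M k' := by
    intro k k' hk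
    induction k', hk using Nat.le_induction with
    | base => exact le_refl _
    | succ k' hk ih => rw [hMsucc]; omega
  have hMstrict : ∀ {k k'}, k < k' → M k < M k' := by
    intro k k' hk
    have h1 : M (k+1) ≤ M k' := hMmono hk
    have := hm1 k
    rw [hMsucc] at h1; omega
  have hMgt : ∀ k, k < M k := by
    intro k
    induction k with
    | zero => omega
    | succ k ih => rw [hMsucc]; have := hm1 k; omega
  set scl : ℕ → ℕ := fun j => Nat.findGreatest (fun k => M k ≤ j) j with hscl
  have hscl1 : ∀ j, 1 ≤ j → M (scl j) ≤ j := by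
    intro j hj
    have hP0 : M 0 ≤ j := by rw [hM0]; exact hj
    exact Nat.findGreatest_spec (P := fun k => M k ≤ j) (Nat.zero_le j) hP0
  have hscl2 : ∀ j, 1 ≤ j → j < M (scl j + 1) := by
    intro j hj
    by_contra hc
    push_neg at hc
    have h1 : scl j + 1 ≤ j := by
      have := hMgt (scl j + 1); omega
    exact absurd hc (Nat.findGreatest_is_greatest (P := fun k => M k ≤ j)
      (Nat.lt_succ_self _) h1)
  have hsclM : ∀ k, scl (M k) = k := by
    intro k
    have h1 : M (scl (M k)) ≤ M k := hscl1 (M k) (by have := hMgt k; omega)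
    have h2 : M k < M (scl (M k) + 1) := hscl2 (M k) (by have := hMgt k; omega)
    by_contra hc
    rcases Nat.lt_or_ge (scl (M k)) k with hlt | hge
    · exact absurd (hMmono (show k ≥ scl (M k) + 1 by omega)) (by omega)
    · exact absurd (hMstrict (show k < scl (M k) by omega)) (by omega)
  have hsclmono : ∀ {j j'}, 1 ≤ j → j ≤ j' → scl j ≤ scl j' := by
    intro j j' hj hjj
    apply Nat.le_findGreatest (le_trans (Nat.findGreatest_le j) hjj)
    exact le_trans (hscl1 j hj) hjj
  set nseq : ℕ → ℕ := fun j => nn (scl j) with hnseq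
  set ε' : ℕ → ℝ := fun j => e (scl j) with hε'
  set L : ℕ → ℕ := fun j => ∑ s ∈ Finset.Ico 1 j, nseq s with hLdef
  set T : ℕ → ℕ := fun k => ∑ k' ∈ Finset.range k, m k' * nn k' with hT
  have hLsucc : ∀ j, 1 ≤ j → L (j+1) = L j + nseq j := by
    intro j hj
    rw [hLdef]
    exact Finset.sum_Ico_succ_top hj _
  have hLmono : ∀ {j j'}, j ≤ j' → L j ≤ L j' := by
    intro j j' hjj
    apply Finset.sum_le_sum_of_subset
    exact Finset.Ico_subset_Ico (le_refl _) hjj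
  have hLlb : ∀ j, j ≤ L j + 1 := by
    intro j
    have : (Finset.Ico 1 j).card ≤ L j := by
      rw [hLdef, Finset.card_eq_sum_ones]
      exact Finset.sum_le_sum (fun s _ => hn1 _)
    rw [Nat.card_Ico] at this
    omega
  have hLM : ∀ k, L (M k) = T k := by
    intro k
    induction k with
    | zero => simp [hM0, hLdef, hT]
    | succ k ih =>
      have h1 : (1:ℕ) ≤ M k := by have := hMgt k; omega
      have h2 : M k ≤ M (k+1) := hMmono (Nat.le_succ k)
      have hsplit : L (M (k+1)) = L (M k) + ∑ s ∈ Finset.Ico (M k) (M (k+1)), nseq s := by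
        rw [hLdef]
        exact (Finset.sum_Ico_consecutive _ h1 h2).symm
      have hconst : ∀ s ∈ Finset.Ico (M k) (M (k+1)), nseq s = nn k := by
        intro s hs
        rw [Finset.mem_Ico] at hs
        have hs1 : 1 ≤ s := le_trans h1 hs.1
        have hup : scl s ≤ k := by
          by_contra hc
          have : M (k+1) ≤ M (scl s) := hMmono (show k + 1 ≤ scl s by omega)
          have := hscl1 s hs1
          omega
        have hlo : k ≤ scl s := by
          rw [← hsclM k]
          exact hsclmono (by have := hMgt k; omega) hs.1
        show nn (scl s) = nn k
        have hks : scl s = k := le_antisymm hup hlo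
        rw [hks]
      have hTsucc : T (k+1) = T k + m k * nn k := by
        simp only [hT, Finset.sum_range_succ]
      rw [hsplit, Finset.sum_congr rfl hconst, Finset.sum_const, Nat.card_Ico, ih, hTsucc,
        hMsucc]
      have hcc : M k + m k - M k = m k := by omega
      rw [hcc, smul_eq_mul]
  have hTNb : ∀ k, 1 ≤ k → Nb k ≤ T k ∧ nn k ≤ T k := by
    intro k hk
    obtain ⟨k', rfl⟩ : ∃ k', k = k' + 1 := ⟨k - 1, by omega⟩
    have h1 : m k' * nn k' ≤ T (k'+1) := by
      simp only [hT, Finset.sum_range_succ]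
      omega
    have h2 : m k' ≤ m k' * nn k' := Nat.le_mul_of_pos_right _ (hn1 k')
    constructor
    · have : Nb (k'+1) ≤ m k' := le_trans (le_max_left _ _) (le_max_right _ _)
      omega
    · have : nn (k'+1) ≤ m k' := le_trans (le_max_right _ _) (le_max_right _ _)
      omega
  -- apply spec
  obtain ⟨y, hy⟩ := spec_limit f hf g kg hspec ε' nseq (fun j => x (L j))
    (fun j _ => he0 _) (fun j _ => hnkg _)
  refine ⟨y, ?_⟩
  -- main estimate
  have key : ∀ k N : ℕ, T (k+1) < N →
      ∑ i ∈ Finset.range N, dist (f^[i] y) (x i)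
        ≤ D * T (k+1) + (4 + 4*D) * e (k+1) * N := by
    intro k N hN
    classical
    set dd : ℕ → ℝ := fun i => dist (f^[i] y) (x i) with hdd
    have hdd0 : ∀ i, 0 ≤ dd i := fun i => dist_nonneg
    have hddD : ∀ i, dd i ≤ D := fun i => hDd _ _
    have hN1 : 1 ≤ N := by omega
    have hL1 : L 1 = 0 := by simp [hLdef]
    set J₀ : ℕ := Nat.findGreatest (fun j => L j < N) N with hJ₀def
    have hJ₀1 : 1 ≤ J₀ :=
      Nat.le_findGreatest (P := fun j => L j < N) hN1 (by omega)
    have hJ₀P : L J₀ < N :=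
      Nat.findGreatest_spec (P := fun j => L j < N) (m := 1) hN1 (by omega)
    have hJ₀le : J₀ ≤ N := Nat.findGreatest_le N
    have hLJ1 : N ≤ L (J₀ + 1) := by
      rcases Nat.lt_or_ge J₀ N with hlt | hge
      · by_contra hc
        push_neg at hc
        exact absurd hc (Nat.findGreatest_is_greatest (P := fun j => L j < N)
          (Nat.lt_succ_self _) (by omega))
      · have := hLlb (J₀ + 1); omega
    have hLMk1 : L (M (k+1)) = T (k+1) := hLM (k+1)
    have hMk1N : M (k+1) ≤ N := by have := hLlb (M (k+1)); omega
    have hMJ : M (k+1) ≤ J₀ :=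
      Nat.le_findGreatest (P := fun j => L j < N) hMk1N (by omega)
    set K := scl J₀ with hK
    have hM1k : 1 ≤ M (k+1) := by have := hMgt (k+1); omega
    have hKk : k + 1 ≤ K := by
      rw [hK, ← hsclM (k+1)]
      exact hsclmono hM1k hMJ
    have hK1 : 1 ≤ K := by omega
    have hMKJ : M K ≤ J₀ := hscl1 J₀ (by omega)
    have hTKN : T K < N := by
      have h1 := hLmono hMKJ
      rw [hLM] at h1
      omega
    have hTKNb : Nb K ≤ T K := (hTNb K hK1).1
    have hTKnn : nn K ≤ T K := (hTNb K hK1).2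
    have hnsJ₀ : nseq J₀ = nn K := rfl
    have hLJ2N : L (J₀ + 1) ≤ 2 * N := by
      have h1 : L (J₀+1) = L J₀ + nseq J₀ := hLsucc J₀ hJ₀1
      rw [hnsJ₀] at h1
      omega
    -- per-block bound
    have pbb : ∀ j, M (k+1) ≤ j → j ≤ J₀ →
        ∑ i ∈ Finset.Ico (L j) (min (L (j+1)) N), dd i
          ≤ (2 + D) * e (k+1) * (nseq j)
            + D * (nn K) * (((Finset.Ico (L j) (L (j+1))).filter
                (fun i => δ K ≤ dist (f (x i)) (x (i+1)))).card : ℝ) := by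
      intro j hjM hjJ
      have hj1 : 1 ≤ j := le_trans hM1k hjM
      set k' := scl j with hk'
      have hk'lo : k + 1 ≤ k' := by
        rw [hk', ← hsclM (k+1)]
        exact hsclmono hM1k hjM
      have hk'hi : k' ≤ K := by
        rw [hk', hK]
        exact hsclmono hj1 hjJ
      have hnsj : nseq j = nn k' := rfl
      have hεj : ε' j = e k' := rfl
      obtain ⟨Λ, hΛr, hΛc, hΛd⟩ := hy j hj1
      have hsumL : (∑ s ∈ Finset.Ico 1 j, nseq s) = L j := rfl
      rw [hsumL, hεj] at hΛd
      rw [hnsj, hεj] at hΛc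
      rw [hnsj] at hΛr
      have hLj1 : L (j+1) = L j + nn k' := by rw [hLsucc j hj1, hnsj]
      set P : ℕ → Prop := fun i => (i - L j ∈ Λ) ∧
        ∀ b, L j ≤ b → b < i → dist (f (x b)) (x (b+1)) < δ k' with hPdef
      set S := Finset.Ico (L j) (min (L (j+1)) N) with hSdef
      have hSmem : ∀ i ∈ S, L j ≤ i ∧ i < L j + nn k' ∧ i < N := by
        intro i hi
        rw [hSdef, Finset.mem_Ico] at hi
        have h2' := hi.2
        refine ⟨hi.1, ?_, lt_of_lt_of_le h2' (min_le_right _ _)⟩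
        have h3' : i < L (j+1) := lt_of_lt_of_le h2' (min_le_left _ _)
        omega
      have hgood : ∀ i ∈ S, P i → dd i ≤ 2 * e k' := by
        intro i hiS hPi
        obtain ⟨hi1, hi2, hi3⟩ := hSmem i hiS
        have hri : (i - L j) + L j = i := by omega
        have hrn : i - L j ≤ nn k' := by omega
        have h1 : dist (f^[i - L j] (x (L j))) (f^[i] y) ≤ e k' := by
          have h1' := hΛd (i - L j) hPi.1
          rw [hri] at h1'
          exact h1'
        have h2 : dist (f^[i - L j] (x (L j))) (x i) < e k' := by
          have heq : L j + (i - L j) = i := by omega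
          have hch := hδc2 k' (fun s => x (L j + s)) (i - L j) hrn
            (fun s hs => lt_of_lt_of_le (hPi.2 (L j + s) (by omega) (by omega)) (hδle k'))
          simpa [heq] using hch
        calc dd i ≤ dist (f^[i] y) (f^[i - L j] (x (L j)))
              + dist (f^[i - L j] (x (L j))) (x i) := dist_triangle _ _ _
          _ ≤ e k' + e k' := add_le_add (by rw [dist_comm]; exact h1) h2.le
          _ = 2 * e k' := by ring
      have hcardS : S.card ≤ nn k' := by
        rw [hSdef]
        calc (Finset.Ico (L j) (min (L (j+1)) N)).card
            ≤ (Finset.Ico (L j) (L j + nn k')).card :=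
              Finset.card_le_card (Finset.Ico_subset_Ico le_rfl (by omega))
          _ = nn k' := by rw [Nat.card_Ico]; omega
      set bc := ((Finset.Ico (L j) (L (j+1))).filter
        (fun i => δ K ≤ dist (f (x i)) (x (i+1)))).card with hbcdef
      have hcardA : (S.filter (fun i => i - L j ∉ Λ)).card ≤ g (nn k') (e k') := by
        have hinj : (S.filter (fun i => i - L j ∉ Λ)).card
            ≤ (Finset.range (nn k') \ Λ).card := by
          apply Finset.card_le_card_of_injOn (fun i => i - L j)
          · intro i hi
            rw [Finset.mem_coe, Finset.mem_filter] at hi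
            obtain ⟨h1', h2', h3'⟩ := hSmem i hi.1
            rw [Finset.mem_coe, Finset.mem_sdiff, Finset.mem_range]
            exact ⟨by show i - L j < nn k'; omega, hi.2⟩
          · intro a ha b hb hab
            rw [Finset.mem_coe, Finset.mem_filter] at ha hb
            have ha' := (hSmem a ha.1).1
            have hb' := (hSmem b hb.1).1
            simp only at hab
            omega
        have hsd : (Finset.range (nn k') \ Λ).card = nn k' - Λ.card := by
          rw [Finset.card_sdiff_of_subset hΛr, Finset.card_range]
        omega
      have hcardB : (S.filter (fun i => ∃ b, L j ≤ b ∧ b < i ∧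
          δ k' ≤ dist (f (x b)) (x (b+1)))).card ≤ nn K * bc := by
        by_cases h0 : bc = 0
        · have hempty : S.filter (fun i => ∃ b, L j ≤ b ∧ b < i ∧
              δ k' ≤ dist (f (x b)) (x (b+1))) = ∅ := by
            rw [Finset.filter_eq_empty_iff]
            intro i hi
            rintro ⟨b, hb1, hb2, hb3⟩
            obtain ⟨hi1, hi2, hi3⟩ := hSmem i hi
            have hbmem : b ∈ (Finset.Ico (L j) (L (j+1))).filter
                (fun i => δ K ≤ dist (f (x i)) (x (i+1))) := by
              rw [Finset.mem_filter, Finset.mem_Ico]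
              exact ⟨⟨hb1, by omega⟩, le_trans (hδanti hk'hi) hb3⟩
            have hemp := Finset.card_eq_zero.mp h0
            rw [hemp] at hbmem
            exact absurd hbmem (Finset.notMem_empty b)
          rw [hempty]
          simp
        · calc (S.filter (fun i => ∃ b, L j ≤ b ∧ b < i ∧
              δ k' ≤ dist (f (x b)) (x (b+1)))).card
              ≤ S.card := Finset.card_filter_le _ _
            _ ≤ nn k' := hcardS
            _ ≤ nn K := hnmono hk'hi
            _ ≤ nn K * bc := Nat.le_mul_of_pos_right _ (by omega)
      have hsub2 : S.filter (fun i => ¬ P i) ⊆ (S.filter (fun i => i - L j ∉ Λ))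
          ∪ (S.filter (fun i => ∃ b, L j ≤ b ∧ b < i ∧
              δ k' ≤ dist (f (x b)) (x (b+1)))) := by
        intro i hi
        rw [Finset.mem_filter] at hi
        rw [Finset.mem_union, Finset.mem_filter, Finset.mem_filter]
        rcases Classical.em (i - L j ∈ Λ) with hA | hA
        · right
          refine ⟨hi.1, ?_⟩
          by_contra hB
          push_neg at hB
          exact hi.2 ⟨hA, fun b hb1 hb2 => hB b hb1 hb2⟩
        · left
          exact ⟨hi.1, hA⟩
      have hcardbad : ((S.filter (fun i => ¬ P i)).card : ℝ)
          ≤ e k' * nn k' + (nn K : ℝ) * bc := by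
        have h1' : (S.filter (fun i => ¬ P i)).card
            ≤ (S.filter (fun i => i - L j ∉ Λ)).card
              + (S.filter (fun i => ∃ b, L j ≤ b ∧ b < i ∧
                  δ k' ≤ dist (f (x b)) (x (b+1)))).card :=
          le_trans (Finset.card_le_card hsub2) (Finset.card_union_le _ _)
        have h2' : (S.filter (fun i => i - L j ∉ Λ)).card
              + (S.filter (fun i => ∃ b, L j ≤ b ∧ b < i ∧
                  δ k' ≤ dist (f (x b)) (x (b+1)))).card
            ≤ g (nn k') (e k') + nn K * bc := add_le_add hcardA hcardB
        calc ((S.filter (fun i => ¬ P i)).card : ℝ)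
            ≤ ((g (nn k') (e k') + nn K * bc : ℕ) : ℝ) := by exact_mod_cast le_trans h1' h2'
          _ = ((g (nn k') (e k') : ℕ) : ℝ) + ((nn K : ℕ) : ℝ) * ((bc : ℕ) : ℝ) := by push_cast; ring
          _ ≤ e k' * nn k' + (nn K : ℝ) * bc := by
              have := hng k'
              have hb0 : (0:ℝ) ≤ ((bc : ℕ) : ℝ) := Nat.cast_nonneg _
              linarith
      have hgsum : ∑ i ∈ S.filter P, dd i ≤ ((S.filter P).card : ℝ) * (2 * e k') := by
        refine le_trans (Finset.sum_le_card_nsmul _ _ (2 * e k') (fun i hi => ?_))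
          (by rw [nsmul_eq_mul])
        rw [Finset.mem_filter] at hi
        exact hgood i hi.1 hi.2
      have hbsum : ∑ i ∈ S.filter (fun i => ¬ P i), dd i
          ≤ ((S.filter (fun i => ¬ P i)).card : ℝ) * D := by
        refine le_trans (Finset.sum_le_card_nsmul _ _ D (fun i _ => hddD i))
          (by rw [nsmul_eq_mul])
      have hfP : ((S.filter P).card : ℝ) ≤ (nn k' : ℝ) := by
        exact_mod_cast le_trans (Finset.card_filter_le _ _) hcardS
      have hek' : e k' ≤ e (k+1) := hemono hk'lo
      have hbc0 : (0:ℝ) ≤ (bc : ℝ) := Nat.cast_nonneg _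
      have hnn0' : (0:ℝ) ≤ (nn k' : ℝ) := Nat.cast_nonneg _
      have hnnK0 : (0:ℝ) ≤ (nn K : ℝ) := Nat.cast_nonneg _
      have he'pos := he0 k'
      calc ∑ i ∈ S, dd i
          = ∑ i ∈ S.filter P, dd i + ∑ i ∈ S.filter (fun i => ¬ P i), dd i :=
            (Finset.sum_filter_add_sum_filter_not S P dd).symm
        _ ≤ ((S.filter P).card : ℝ) * (2 * e k')
            + ((S.filter (fun i => ¬ P i)).card : ℝ) * D := add_le_add hgsum hbsum
        _ ≤ (nn k' : ℝ) * (2 * e k') + (e k' * nn k' + (nn K : ℝ) * bc) * D := by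
            apply add_le_add
            · exact mul_le_mul_of_nonneg_right hfP (by linarith)
            · exact mul_le_mul_of_nonneg_right hcardbad hDpos.le
        _ ≤ (2 + D) * e (k+1) * (nseq j) + D * (nn K) * bc := by
            rw [hnsj]
            nlinarith [mul_le_mul_of_nonneg_right hek' hnn0', hDpos, hbc0, hnnK0, he'pos]
    -- assembly
    have hsplit : ∑ i ∈ Finset.range N, dd i
        = ∑ i ∈ Finset.Ico 0 (T (k+1)), dd i + ∑ i ∈ Finset.Ico (T (k+1)) N, dd i := by
      rw [Finset.sum_Ico_consecutive dd (Nat.zero_le _) (le_of_lt hN), ← Finset.range_eq_Ico]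
    have hpart1 : ∑ i ∈ Finset.Ico 0 (T (k+1)), dd i ≤ D * T (k+1) := by
      calc ∑ i ∈ Finset.Ico 0 (T (k+1)), dd i ≤ ∑ _i ∈ Finset.Ico 0 (T (k+1)), D :=
            Finset.sum_le_sum (fun i _ => hddD i)
        _ = D * T (k+1) := by
            rw [Finset.sum_const, Nat.card_Ico, nsmul_eq_mul, Nat.sub_zero, mul_comm]
    have hpart2 : ∑ i ∈ Finset.Ico (T (k+1)) N, dd i ≤ (4 + 4*D) * e (k+1) * N := by
      set c : ℕ → ℕ := fun j => min (L j) N with hcdef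
      have hcmono : Monotone c := fun a b hab => min_le_min (hLmono hab) (le_refl N)
      have h0 : ∑ i ∈ Finset.Ico (T (k+1)) N, dd i
          = ∑ j ∈ Finset.Ico (M (k+1)) (J₀+1), ∑ i ∈ Finset.Ico (c j) (c (j+1)), dd i := by
        rw [sum_Ico_telescope dd c hcmono (show M (k+1) ≤ J₀+1 by omega)]
        have e1 : c (M (k+1)) = T (k+1) := by
          show min (L (M (k+1))) N = T (k+1)
          rw [hLMk1]
          exact min_eq_left (le_of_lt hN)
        have e2 : c (J₀+1) = N := min_eq_right hLJ1
        rw [e1, e2]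
      have h1 : ∀ j ∈ Finset.Ico (M (k+1)) (J₀+1),
          ∑ i ∈ Finset.Ico (c j) (c (j+1)), dd i
            ≤ (2 + D) * e (k+1) * (nseq j)
              + D * (nn K) * (((Finset.Ico (L j) (L (j+1))).filter
                  (fun i => δ K ≤ dist (f (x i)) (x (i+1)))).card : ℝ) := by
        intro j hj
        rw [Finset.mem_Ico] at hj
        have hcj : c j = L j := min_eq_left
          (le_of_lt (lt_of_le_of_lt (hLmono (show j ≤ J₀ by omega)) hJ₀P))
        have hcj1 : c (j+1) = min (L (j+1)) N := rfl
        rw [hcj, hcj1]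
        exact pbb j hj.1 (by omega)
      have h2 : ∑ i ∈ Finset.Ico (T (k+1)) N, dd i
          ≤ (2 + D) * e (k+1) * (∑ j ∈ Finset.Ico (M (k+1)) (J₀+1), (nseq j : ℝ))
            + D * (nn K) * (∑ j ∈ Finset.Ico (M (k+1)) (J₀+1),
                (((Finset.Ico (L j) (L (j+1))).filter
                  (fun i => δ K ≤ dist (f (x i)) (x (i+1)))).card : ℝ)) := by
        rw [h0]
        calc ∑ j ∈ Finset.Ico (M (k+1)) (J₀+1), ∑ i ∈ Finset.Ico (c j) (c (j+1)), dd i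
            ≤ ∑ j ∈ Finset.Ico (M (k+1)) (J₀+1),
              ((2 + D) * e (k+1) * (nseq j)
                + D * (nn K) * (((Finset.Ico (L j) (L (j+1))).filter
                    (fun i => δ K ≤ dist (f (x i)) (x (i+1)))).card : ℝ)) :=
              Finset.sum_le_sum h1
          _ = _ := by rw [Finset.sum_add_distrib, Finset.mul_sum, Finset.mul_sum]
      -- bound the two sums
      have hsum1 : ∑ j ∈ Finset.Ico (M (k+1)) (J₀+1), (nseq j : ℝ) ≤ 2 * N := by
        have hnat : T (k+1) + ∑ j ∈ Finset.Ico (M (k+1)) (J₀+1), nseq j = L (J₀+1) := by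
          have hcons := Finset.sum_Ico_consecutive nseq hM1k (show M (k+1) ≤ J₀+1 by omega)
          have hLa : L (M (k+1)) = ∑ s ∈ Finset.Ico 1 (M (k+1)), nseq s := rfl
          have hLb : L (J₀+1) = ∑ s ∈ Finset.Ico 1 (J₀+1), nseq s := rfl
          omega
        rw [← Nat.cast_sum]
        have hle : ∑ j ∈ Finset.Ico (M (k+1)) (J₀+1), nseq j ≤ 2 * N := by omega
        exact_mod_cast hle
      have hsum2 : ∑ j ∈ Finset.Ico (M (k+1)) (J₀+1),
          (((Finset.Ico (L j) (L (j+1))).filter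
            (fun i => δ K ≤ dist (f (x i)) (x (i+1)))).card : ℝ)
          ≤ e K / nn K * (L (J₀+1)) := by
        have htel : ∑ j ∈ Finset.Ico (M (k+1)) (J₀+1),
            ((Finset.Ico (L j) (L (j+1))).filter
              (fun i => δ K ≤ dist (f (x i)) (x (i+1)))).card
            = ((Finset.Ico (T (k+1)) (L (J₀+1))).filter
              (fun i => δ K ≤ dist (f (x i)) (x (i+1)))).card := by
          have := sum_Ico_telescope
            (fun i => if δ K ≤ dist (f (x i)) (x (i+1)) then 1 else 0) L
            (fun a b hab => hLmono hab) (show M (k+1) ≤ J₀+1 by omega)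
          simp only [Finset.card_filter]
          rw [this, hLMk1]
        have hmono2 : ((Finset.Ico (T (k+1)) (L (J₀+1))).filter
            (fun i => δ K ≤ dist (f (x i)) (x (i+1)))).card
            ≤ ((Finset.range (L (J₀+1))).filter
              (fun i => δ K ≤ dist (f (x i)) (x (i+1)))).card := by
          apply Finset.card_le_card
          apply Finset.filter_subset_filter
          intro i hi
          rw [Finset.mem_Ico] at hi
          rw [Finset.mem_range]
          omega
        have hbad := hNb2 K (L (J₀+1)) (by omega)
        rw [← Nat.cast_sum, htel]
        calc (((Finset.Ico (T (k+1)) (L (J₀+1))).filter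
              (fun i => δ K ≤ dist (f (x i)) (x (i+1)))).card : ℝ)
            ≤ (((Finset.range (L (J₀+1))).filter
              (fun i => δ K ≤ dist (f (x i)) (x (i+1)))).card : ℝ) := by exact_mod_cast hmono2
          _ ≤ e K / nn K * (L (J₀+1)) := hbad
      -- combine
      have hnnK : (0:ℝ) < nn K := by exact_mod_cast hn1 K
      have heK : e K ≤ e (k+1) := hemono hKk
      have heK0 := he0 K
      have hek0 := he0 (k+1)
      have hL2N : ((L (J₀+1) : ℕ) : ℝ) ≤ 2 * N := by exact_mod_cast hLJ2N
      have hterm2 : D * (nn K) * (∑ j ∈ Finset.Ico (M (k+1)) (J₀+1),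
          (((Finset.Ico (L j) (L (j+1))).filter
            (fun i => δ K ≤ dist (f (x i)) (x (i+1)))).card : ℝ))
          ≤ 2 * D * e (k+1) * N := by
        have h3 : D * (nn K) * (∑ j ∈ Finset.Ico (M (k+1)) (J₀+1),
            (((Finset.Ico (L j) (L (j+1))).filter
              (fun i => δ K ≤ dist (f (x i)) (x (i+1)))).card : ℝ))
            ≤ D * (nn K) * (e K / nn K * (L (J₀+1))) := by
          apply mul_le_mul_of_nonneg_left hsum2 (by positivity)
        have h4 : D * (nn K) * (e K / nn K * (L (J₀+1))) = D * e K * (L (J₀+1)) := by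
          field_simp
        rw [h4] at h3
        calc D * (nn K) * _ ≤ D * e K * (L (J₀+1)) := h3
          _ ≤ D * e (k+1) * (2 * N) := by gcongr
          _ = 2 * D * e (k+1) * N := by ring
      have hterm1 : (2 + D) * e (k+1) * (∑ j ∈ Finset.Ico (M (k+1)) (J₀+1), (nseq j : ℝ))
          ≤ (2 + D) * e (k+1) * (2 * N) := by
        apply mul_le_mul_of_nonneg_left hsum1 (by positivity)
      calc ∑ i ∈ Finset.Ico (T (k+1)) N, dd i ≤ _ := h2
        _ ≤ (2 + D) * e (k+1) * (2 * N) + 2 * D * e (k+1) * N := add_le_add hterm1 hterm2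
        _ = (4 + 4*D) * e (k+1) * N := by ring
    rw [hsplit]
    linarith
  -- conclude
  show Tendsto (fun n : ℕ => (∑ i ∈ Finset.range n, dist (f^[i] y) (x i)) / n) atTop (nhds 0)
  rw [Metric.tendsto_atTop]
  intro ε hε
  obtain ⟨k0, hk0⟩ := helim (ε / (2 * (4 + 4*D))) (by positivity)
  set k := k0 + 1 with hk
  have hek : (4 + 4*D) * e k < ε / 2 := by
    have h1 : e k ≤ e k0 := hemono (by omega)
    have h2 : (0:ℝ) < 4 + 4*D := by linarith
    calc (4 + 4*D) * e k ≤ (4 + 4*D) * e k0 := by nlinarith [he0 k]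
    _ < (4 + 4*D) * (ε / (2 * (4 + 4*D))) := by nlinarith
    _ = ε / 2 := by field_simp
  obtain ⟨N₁, hN₁⟩ := exists_nat_gt (2 * D * (T k) / ε)
  refine ⟨max N₁ (T k + 1), fun N hN => ?_⟩
  have hN1 : T k < N := lt_of_lt_of_le (by omega : T k < max N₁ (T k + 1)) hN
  have hNpos : (0:ℝ) < N := by
    have : 1 ≤ N := by omega
    exact_mod_cast this
  have hsum := key k0 N hN1
  rw [← hk] at hsum
  have hnonneg : 0 ≤ ∑ i ∈ Finset.range N, dist (f^[i] y) (x i) :=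
    Finset.sum_nonneg (fun i _ => dist_nonneg)
  rw [Real.dist_0_eq_abs, abs_of_nonneg (by positivity)]
  rw [div_lt_iff₀ hNpos]
  have hDT : D * T k < ε / 2 * N := by
    have hN₁' : (N₁ : ℝ) ≤ N := by exact_mod_cast le_trans (le_max_left _ _) hN
    have : 2 * D * (T k) / ε < N := lt_of_lt_of_le hN₁ hN₁'
    rw [div_lt_iff₀ hε] at this
    nlinarith
  have : (4 + 4*D) * e k * N < ε / 2 * N := by nlinarith
  linarith
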